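/- Let (G, c) be a Max-2Lin_k instance with nonnegative edge costs c_e and nonnegative edge weights x_e such that every inconsistent cycle of G has total weight at least 1. Let F1 = {e : x_e ≥ 1/2} and let G' = G − F1. Let P be a random partition of the vertex set such that, almost surely, d_{x,G'}(u,v) ≤ 1/4 for every pair of vertices u, v in the same cluster, and such that Pr[P(u) ≠ P(v)] ≤ 4D·x_{uv} for every edge uv of G', where D ≥ 0. Let F2 be the (random) set of edges uv of G' with P(u) ≠ P(v). Then the instance restricted to G − (F1 ∪ F2) is almost surely satisfiable, and E[ Σ_{e ∈ F1 ∪ F2} c_e ] ≤ (2 + 4D) · Σ_{e ∈ E(G)} c_e x_e. -/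

import Mathlib

open SimpleGraph

/-- The weight of a walk: the sum of the weights of its edges, counted with multiplicity. -/
def walkWeight {V : Type*} {G : SimpleGraph V} (x : Sym2 V → ℝ) {u v : V}
    (p : G.Walk u v) : ℝ :=
  (p.edges.map x).sum

/-- The shortest-path distance between `u` and `v` induced by the edge weights `x`. -/
noncomputable def wdist {V : Type*} (G : SimpleGraph V) (x : Sym2 V → ℝ) (u v : V) : ℝ :=
  sInf {r | ∃ p : G.Walk u v, walkWeight x p = r}

/-- The sum of the constants `c` along a walk: `c_{v_0 v_1} + c_{v_1 v_2} + ⋯ + c_{v_{l-1} v_l}`. -/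
def walkSum {V : Type*} {k : ℕ} {G : SimpleGraph V} (c : V → V → ZMod k) {u v : V}
    (p : G.Walk u v) : ZMod k :=
  (p.darts.map (fun d => c d.fst d.snd)).sum

section AuxLemmas

variable {V : Type*} {k : ℕ} {Γ : SimpleGraph V}

@[simp] lemma walkSum_nil (c : V → V → ZMod k) (v : V) :
    walkSum c (Walk.nil : Γ.Walk v v) = 0 := rfl

@[simp] lemma walkSum_cons (c : V → V → ZMod k) {u v w : V} (h : Γ.Adj u v) (p : Γ.Walk v w) :
    walkSum c (Walk.cons h p) = c u v + walkSum c p := by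
  simp [walkSum]

lemma walkSum_append (c : V → V → ZMod k) {u v w : V} (p : Γ.Walk u v) (q : Γ.Walk v w) :
    walkSum c (p.append q) = walkSum c p + walkSum c q := by
  simp [walkSum, Walk.darts_append]

lemma walkSum_copy (c : V → V → ZMod k) {u v u' v' : V} (p : Γ.Walk u v)
    (h1 : u = u') (h2 : v = v') :
    walkSum c (p.copy h1 h2) = walkSum c p := by
  subst h1; subst h2; rw [Walk.copy_rfl_rfl]

@[simp] lemma walkWeight_nil (x : Sym2 V → ℝ) (v : V) :
    walkWeight x (Walk.nil : Γ.Walk v v) = 0 := rfl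

@[simp] lemma walkWeight_cons (x : Sym2 V → ℝ) {u v w : V} (h : Γ.Adj u v) (p : Γ.Walk v w) :
    walkWeight x (Walk.cons h p) = x s(u, v) + walkWeight x p := by
  simp [walkWeight]

lemma walkWeight_append (x : Sym2 V → ℝ) {u v w : V} (p : Γ.Walk u v) (q : Γ.Walk v w) :
    walkWeight x (p.append q) = walkWeight x p + walkWeight x q := by
  simp [walkWeight, Walk.edges_append]

lemma walkWeight_reverse (x : Sym2 V → ℝ) {u v : V} (p : Γ.Walk u v) :
    walkWeight x p.reverse = walkWeight x p := by
  simp [walkWeight, Walk.edges_reverse, List.sum_reverse]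

lemma walkSum_reverse (c : V → V → ZMod k) (hc : ∀ u v, Γ.Adj u v → c v u = -c u v)
    {u v : V} (p : Γ.Walk u v) :
    walkSum c p.reverse = - walkSum c p := by
  induction p with
  | nil => simp
  | cons h p ih =>
    rw [Walk.reverse_cons, walkSum_append, ih, walkSum_cons]
    rw [hc _ _ h]
    simp only [walkSum_cons, walkSum_nil, add_zero]
    abel

lemma walkSum_transfer (c : V → V → ZMod k) {u v : V} (p : Γ.Walk u v) (H : SimpleGraph V)
    (hp : ∀ e ∈ p.edges, e ∈ H.edgeSet) :
    walkSum c (p.transfer H hp) = walkSum c p := by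
  induction p with
  | nil => rfl
  | cons h p ih =>
    rw [walkSum_cons]; exact (walkSum_cons c _ _).trans (congrArg _ (ih _))

lemma walkWeight_transfer (x : Sym2 V → ℝ) {u v : V} (p : Γ.Walk u v) (H : SimpleGraph V)
    (hp : ∀ e ∈ p.edges, e ∈ H.edgeSet) :
    walkWeight x (p.transfer H hp) = walkWeight x p := by
  simp [walkWeight, Walk.edges_transfer]

lemma walkWeight_nonneg (x : Sym2 V → ℝ) (hx : ∀ e ∈ Γ.edgeSet, 0 ≤ x e)
    {u v : V} (p : Γ.Walk u v) : 0 ≤ walkWeight x p := by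
  apply List.sum_nonneg
  intro a ha
  obtain ⟨e, he, rfl⟩ := List.mem_map.mp ha
  exact hx e (p.edges_subset_edgeSet he)

lemma walkSum_telescope (c : V → V → ZMod k) (φ : V → ZMod k) {u v : V}
    (p : Γ.Walk u v) (h : ∀ d ∈ p.darts, c d.fst d.snd = φ d.snd - φ d.fst) :
    walkSum c p = φ v - φ u := by
  induction p with
  | nil => simp
  | cons ha p ih =>
    rw [walkSum_cons]
    have h1 := h (SimpleGraph.Dart.mk (_, _) ha) (by simp [Walk.darts_cons])
    rw [show c _ _ = _ from h1, ih (fun d hd => h d (by simp [Walk.darts_cons, hd]))]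
    abel

lemma path_closed_eq_nil {v : V} (q : Γ.Walk v v) (hq : q.IsPath) : q.length = 0 := by
  cases q with
  | nil => rfl
  | cons h r =>
    exfalso
    rw [Walk.isPath_def, Walk.support_cons, List.nodup_cons] at hq
    exact hq.1 r.end_mem_support

lemma foldrmax_nonneg (l : List ℝ) : 0 ≤ l.foldr max 0 := by
  induction l with
  | nil => simp
  | cons a l ih => simpa using Or.inr ih

lemma le_foldrmax (l : List ℝ) (a : ℝ) (ha : a ∈ l) : a ≤ l.foldr max 0 := by
  induction l with
  | nil => simp at ha
  | cons b l ih =>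
    rcases List.mem_cons.mp ha with rfl | ha'
    · exact le_max_left _ _
    · exact le_trans (ih ha') (le_max_right _ _)

lemma foldrmax_lt (l : List ℝ) (b : ℝ) (hb : 0 < b) (h : ∀ a ∈ l, a < b) :
    l.foldr max 0 < b := by
  induction l with
  | nil => simpa using hb
  | cons a l ih =>
    simp only [List.foldr_cons, max_lt_iff]
    exact ⟨h a (by simp), ih fun a ha => h a (by simp [ha])⟩

/-- Any closed walk with nonzero constraint sum contains a cycle with nonzero constraint
sum and no greater weight. -/
lemma walk_decomp [DecidableEq V] (c : V → V → ZMod k) (x : Sym2 V → ℝ)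
    (hx : ∀ e ∈ Γ.edgeSet, 0 ≤ x e) (hc : ∀ u v, Γ.Adj u v → c v u = -c u v) :
    ∀ (n : ℕ) (v : V) (W : Γ.Walk v v), W.length ≤ n → walkSum c W ≠ 0 →
      ∃ (u : V) (C : Γ.Walk u u), C.IsCycle ∧ walkSum c C ≠ 0 ∧
        walkWeight x C ≤ walkWeight x W := by
  intro n
  induction n using Nat.strong_induction_on with
  | _ n ih =>
  intro v W hlen hsum
  by_cases hnd : W.support.tail.Nodup
  · -- tail nodup: W is nil, a 2-step backtrack, or a genuine cycle
    cases W with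
    | nil => simp at hsum
    | cons h rest =>
      rename_i b
      have hrp : rest.IsPath := by
        rw [Walk.isPath_def]
        simpa [Walk.support_cons] using hnd
      by_cases he : s(v, b) ∈ rest.edges
      · -- backtrack case
        exfalso
        cases rest with
        | nil => simp at he
        | cons h' q =>
          rename_i a
          rw [Walk.edges_cons, List.mem_cons] at he
          rcases he with heq | hin
          · have hvb : v ≠ b := h.ne
            have hav : a = v := by
              rw [Sym2.eq_iff] at heq
              rcases heq with ⟨h1, _⟩ | ⟨h1, _⟩
              · exact absurd h1 hvb
              · exact h1.symm
            subst hav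
            have hq : q.IsPath := hrp.of_cons
            have hq0 : q.length = 0 := path_closed_eq_nil q hq
            have hqnil : q = Walk.nil := by
              cases q with
              | nil => rfl
              | cons _ _ => simp [Walk.length_cons] at hq0
            subst hqnil
            rw [walkSum_cons, walkSum_cons, walkSum_nil, add_zero, hc _ _ h] at hsum
            simp at hsum
          · have hb : b ∈ q.support :=
              Walk.fst_mem_support_of_mem_edges q (by rwa [Sym2.eq_swap] at hin)
            rw [Walk.isPath_def, Walk.support_cons, List.nodup_cons] at hrp
            exact hrp.1 hb
      · exact ⟨v, Walk.cons h rest,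
          (Walk.cons_isCycle_iff rest h).mpr ⟨hrp, he⟩, hsum, le_refl _⟩
  · -- there is a repeated vertex: split W into two shorter closed walks
    obtain ⟨z, hz⟩ : ∃ z, 2 ≤ W.support.tail.count z := by
      by_contra h'
      push_neg at h'
      exact hnd (List.nodup_iff_count_le_one.mpr fun a => by have := h' a; omega)
    by_cases hzv : z = v
    · subst hzv
      cases W with
      | nil => simp at hz
      | cons h rest =>
        rename_i b
        have hcv : 2 ≤ rest.support.count z := by
          simpa [Walk.support_cons] using hz
        have hv : z ∈ rest.support := List.count_pos_iff.mp (by omega)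
        set t := rest.takeUntil z hv with ht
        set d := rest.dropUntil z hv with hd
        have hspec : t.append d = rest := rest.take_spec hv
        have hct : t.support.count z = 1 := rest.count_support_takeUntil_eq_one hv
        have hds : rest.support = t.support ++ d.support.tail := by
          rw [← hspec, Walk.support_append]
        have hd1 : 1 ≤ d.support.tail.count z := by
          rw [hds, List.count_append, hct] at hcv; omega
        have hdlen : 0 < d.length := by
          have h1 : d.support.tail.length = d.length := by
            have := Walk.length_support d
            simp [List.length_tail, this]
          have h2 : 0 < d.support.tail.length := by
            have : z ∈ d.support.tail := List.count_pos_iff.mp (by omega)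
            exact List.length_pos_iff.mpr (List.ne_nil_of_mem this)
          omega
        have hsumW : walkSum c (Walk.cons h rest) = walkSum c (Walk.cons h t) + walkSum c d := by
          rw [walkSum_cons, walkSum_cons, ← hspec, walkSum_append]; ring
        have hwW : walkWeight x (Walk.cons h rest)
            = walkWeight x (Walk.cons h t) + walkWeight x d := by
          rw [walkWeight_cons, walkWeight_cons, ← hspec, walkWeight_append]; ring
        have hlenW : (Walk.cons h rest).length = (Walk.cons h t).length + d.length := by
          rw [Walk.length_cons, Walk.length_cons, ← hspec, Walk.length_append]; ring
        have hone : walkSum c (Walk.cons h t) ≠ 0 ∨ walkSum c d ≠ 0 := by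
          by_contra hcon
          push_neg at hcon
          rw [hsumW, hcon.1, hcon.2, add_zero] at hsum
          exact hsum rfl
        rcases hone with hA | hB
        · obtain ⟨u, C, h1, h2, h3⟩ := ih (Walk.cons h t).length
            (by omega) z (Walk.cons h t) le_rfl hA
          exact ⟨u, C, h1, h2, by
            have := walkWeight_nonneg x hx d; rw [hwW]; linarith⟩
        · obtain ⟨u, C, h1, h2, h3⟩ := ih d.length (by
            have hA1 : 0 < (Walk.cons h t).length := by
              rw [Walk.length_cons]; omega
            omega) z d le_rfl hB
          exact ⟨u, C, h1, h2, by
            have := walkWeight_nonneg x hx (Walk.cons h t); rw [hwW]; linarith⟩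
    · -- z ≠ v
      have hzm : z ∈ W.support := by
        have : z ∈ W.support.tail := List.count_pos_iff.mp (by omega)
        rw [Walk.support_eq_cons]
        exact List.mem_cons_of_mem _ this
      set t := W.takeUntil z hzm with ht
      set d := W.dropUntil z hzm with hd
      have hspec : t.append d = W := W.take_spec hzm
      have hct : t.support.count z = 1 := W.count_support_takeUntil_eq_one hzm
      have hWs : W.support = t.support ++ d.support.tail := by
        rw [← hspec, Walk.support_append]
      have hWcount : 2 ≤ W.support.count z :=
        le_trans hz ((List.tail_sublist W.support).count_le z)
      have hdc : 1 ≤ d.support.tail.count z := by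
        rw [hWs, List.count_append, hct] at hWcount; omega
      have hdcount : 2 ≤ d.support.count z := by
        have h1 : d.support.count z = d.support.tail.count z + 1 := by
          rw [Walk.support_eq_cons d]
          simp only [List.count_cons_self, List.tail_cons]
        omega
      set dr := d.reverse with hdr
      have hdrc : 2 ≤ dr.support.count z := by
        rw [hdr, Walk.support_reverse, List.count_reverse]
        exact hdcount
      have hzm2 : z ∈ dr.support := List.count_pos_iff.mp (by omega)
      set t' := dr.takeUntil z hzm2 with ht'
      set d' := dr.dropUntil z hzm2 with hd'
      have hspec2 : t'.append d' = dr := dr.take_spec hzm2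
      have hct' : t'.support.count z = 1 := dr.count_support_takeUntil_eq_one hzm2
      have hdrs : dr.support = t'.support ++ d'.support.tail := by
        rw [← hspec2, Walk.support_append]
      have hd'c : 1 ≤ d'.support.tail.count z := by
        rw [hdrs, List.count_append, hct'] at hdrc; omega
      have hd'len : 0 < d'.length := by
        have h1 : d'.support.tail.length = d'.length := by
          have := Walk.length_support d'
          simp [List.length_tail, this]
        have h2 : 0 < d'.support.tail.length := by
          have : z ∈ d'.support.tail := List.count_pos_iff.mp (by omega)
          exact List.length_pos_iff.mpr (List.ne_nil_of_mem this)
        omega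
      have htlen : 0 < t.length := by
        rcases Nat.eq_zero_or_pos t.length with h0 | h0
        · exact absurd (Walk.eq_of_length_eq_zero h0) (Ne.symm hzv)
        · exact h0
      have hdeq : d = d'.reverse.append t'.reverse := by
        calc d = d.reverse.reverse := (Walk.reverse_reverse d).symm
          _ = (t'.append d').reverse := by rw [hspec2]
          _ = d'.reverse.append t'.reverse := Walk.reverse_append _ _
      have hsumW : walkSum c W = walkSum c d'.reverse + walkSum c (t.append t'.reverse) := by
        rw [← hspec, walkSum_append, hdeq, walkSum_append, walkSum_append]; ring
      have hwW : walkWeight x W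
          = walkWeight x d'.reverse + walkWeight x (t.append t'.reverse) := by
        rw [← hspec, walkWeight_append, hdeq, walkWeight_append, walkWeight_append]; ring
      have hlenW : W.length = d'.reverse.length + (t.append t'.reverse).length := by
        rw [← hspec, Walk.length_append, hdeq, Walk.length_append, Walk.length_append]; ring
      have hAlen : 0 < d'.reverse.length := by rw [Walk.length_reverse]; exact hd'len
      have hBlen : 0 < (t.append t'.reverse).length := by
        rw [Walk.length_append]; omega
      have hone : walkSum c d'.reverse ≠ 0 ∨ walkSum c (t.append t'.reverse) ≠ 0 := by
        by_contra hcon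
        push_neg at hcon
        rw [hsumW, hcon.1, hcon.2, add_zero] at hsum
        exact hsum rfl
      rcases hone with hA | hB
      · obtain ⟨u, C, h1, h2, h3⟩ := ih d'.reverse.length (by omega) z d'.reverse le_rfl hA
        exact ⟨u, C, h1, h2, by
          have := walkWeight_nonneg x hx (t.append t'.reverse); rw [hwW]; linarith⟩
      · obtain ⟨u, C, h1, h2, h3⟩ := ih (t.append t'.reverse).length (by omega) v
          (t.append t'.reverse) le_rfl hB
        exact ⟨u, C, h1, h2, by
          have := walkWeight_nonneg x hx d'.reverse; rw [hwW]; linarith⟩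

end AuxLemmas

/-- Rounding analysis for `Max-2Lin_k`: deleting the heavy edges `F1` and the (random)
inter-cluster edges `F2` of a low diameter decomposition leaves an almost surely satisfiable
instance, with expected deleted cost at most `(2 + 4D) · Σ c_e x_e`. -/
theorem stmt13 {V : Type*} [Fintype V] [DecidableEq V] {k : ℕ} (hk : 1 ≤ k)
    (G : SimpleGraph V) [DecidableRel G.Adj]
    (c : V → V → ZMod k) (hc : ∀ u v, G.Adj u v → c v u = -c u v)
    (cost x : Sym2 V → ℝ)
    (hcost : ∀ e ∈ G.edgeSet, 0 ≤ cost e) (hx : ∀ e ∈ G.edgeSet, 0 ≤ x e)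
    (hincons : ∀ (v : V) (C : G.Walk v v), C.IsCycle → walkSum c C ≠ 0 →
      1 ≤ walkWeight x C)
    (F1 : Set (Sym2 V)) (hF1 : F1 = {e ∈ G.edgeSet | 1 / 2 ≤ x e})
    (G' : SimpleGraph V) (hG' : G' = G.deleteEdges F1)
    (D : ℝ) (hD : 0 ≤ D)
    (Ω : Type*) [Fintype Ω] (μ : Ω → ℝ) (hμ0 : ∀ ω, 0 ≤ μ ω) (hμ1 : ∑ ω, μ ω = 1)
    (P : Ω → V → ℕ)
    (hdiam : ∀ ω, 0 < μ ω → ∀ u v, P ω u = P ω v → wdist G' x u v ≤ 1 / 4)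
    (hcut : ∀ u v, G'.Adj u v →
      ∑ ω, (if P ω u ≠ P ω v then μ ω else 0) ≤ 4 * D * x s(u, v))
    (F2 : Ω → Set (Sym2 V))
    (hF2 : ∀ ω, F2 ω = {e | e ∈ G'.edgeSet ∧ ∃ u v, e = s(u, v) ∧ P ω u ≠ P ω v}) :
    (∀ ω, 0 < μ ω → ∃ f : V → ZMod k,
        ∀ u v, (G.deleteEdges (F1 ∪ F2 ω)).Adj u v → f v - f u = c u v) ∧
      ∑ ω, μ ω * ∑ e ∈ G.edgeFinset, Set.indicator (F1 ∪ F2 ω) cost e ≤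
        (2 + 4 * D) * ∑ e ∈ G.edgeFinset, cost e * x e := by
  classical
  have hG'sub : G'.edgeSet ⊆ G.edgeSet := by
    rw [hG', edgeSet_deleteEdges]; exact Set.diff_subset
  -- Lemma B : every light closed walk in G is consistent
  have lemB : ∀ (v : V) (W : G.Walk v v), walkWeight x W < 1 → walkSum c W = 0 := by
    intro v W hw
    by_contra hne
    obtain ⟨u, C, h1, h2, h3⟩ := walk_decomp c x hx hc W.length v W le_rfl hne
    have := hincons u C h1 h2
    linarith
  constructor
  · -- almost sure satisfiability
    intro ω hω
    set H := G.deleteEdges (F1 ∪ F2 ω) with hH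
    have hHsubG : H.edgeSet ⊆ G.edgeSet := by
      rw [hH, edgeSet_deleteEdges]; exact Set.diff_subset
    have hHsub : H.edgeSet ⊆ G'.edgeSet := by
      rw [hH, hG', edgeSet_deleteEdges, edgeSet_deleteEdges]
      rintro e ⟨h1, h2⟩
      exact ⟨h1, fun hf => h2 (Or.inl hf)⟩
    have hHadjG : ∀ {a b : V}, H.Adj a b → G.Adj a b := by
      intro a b h
      rw [hH, deleteEdges_adj] at h
      exact h.1
    have hcH : ∀ u v, H.Adj u v → c v u = -c u v := fun u v h => hc u v (hHadjG h)
    -- P is constant along H-edges, hence along H-walks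
    have hPadj : ∀ a b : V, H.Adj a b → P ω a = P ω b := by
      intro a b hab
      by_contra hne
      have hmem : s(a, b) ∈ H.edgeSet := (H.mem_edgeSet).mpr hab
      have hnot : s(a, b) ∉ F2 ω := by
        rw [hH, edgeSet_deleteEdges] at hmem
        exact fun hf => hmem.2 (Or.inr hf)
      exact hnot (by rw [hF2 ω]; exact ⟨hHsub hmem, a, b, rfl, hne⟩)
    have hPwalk : ∀ (a b : V) (p : H.Walk a b), P ω a = P ω b := by
      intro a b p
      induction p with
      | nil => rfl
      | cons h q ih => exact (hPadj _ _ h).trans ih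
    -- every cycle in H is consistent
    have claim1 : ∀ (z : V) (C : H.Walk z z), C.IsCycle → walkSum c C = 0 := by
      intro z C hcyc
      have hCedges : ∀ e ∈ C.edges, e ∈ H.edgeSet := fun e he => C.edges_subset_edgeSet he
      have hlt : ∀ e ∈ C.edges, x e < 1 / 2 := by
        intro e he
        have heH : e ∈ H.edgeSet := hCedges e he
        have heG : e ∈ G.edgeSet := hHsubG heH
        have hnF1 : e ∉ F1 := by
          rw [hH, edgeSet_deleteEdges] at heH
          exact fun hf => heH.2 (Or.inl hf)
        by_contra hge
        push_neg at hge
        exact hnF1 (by rw [hF1]; exact ⟨heG, hge⟩)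
      set mx : ℝ := (C.edges.map x).foldr max 0 with hmx
      have hmx0 : 0 ≤ mx := foldrmax_nonneg _
      have hmxlt : mx < 1 / 2 := by
        apply foldrmax_lt _ _ (by norm_num)
        intro a ha
        obtain ⟨e, he, rfl⟩ := List.mem_map.mp ha
        exact hlt e he
      set ε : ℝ := (1 / 2 - mx) / 2 with hε
      have hεpos : 0 < ε := by rw [hε]; linarith
      -- short walks in G' from z to every support vertex of C
      have key : ∀ v ∈ C.support, ∃ p : G'.Walk z v, walkWeight x p < 1 / 4 + ε := by
        intro v hv
        have hPzv : P ω z = P ω v := hPwalk z v (C.takeUntil v hv)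
        have hne : {r | ∃ p : G'.Walk z v, walkWeight x p = r}.Nonempty := by
          refine ⟨_, (C.takeUntil v hv).transfer G'
            (fun e he => hHsub ((C.takeUntil v hv).edges_subset_edgeSet he)), rfl⟩
        obtain ⟨r, hr, hrlt⟩ := Real.lt_sInf_add_pos hne hεpos
        have hwd : wdist G' x z v ≤ 1 / 4 := hdiam ω hω z v hPzv
        rw [wdist] at hwd
        obtain ⟨p, hp⟩ := hr
        exact ⟨p, by rw [hp]; linarith⟩
      choose q hq using key
      set φ : V → ZMod k :=
        fun v => if hv : v ∈ C.support then walkSum c (q v hv) else 0 with hφ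
      have hdart : ∀ d ∈ C.darts, c d.fst d.snd = φ d.snd - φ d.fst := by
        intro d hd
        have hu : d.fst ∈ C.support := Walk.dart_fst_mem_support_of_mem_darts _ hd
        have hv' : d.snd ∈ C.support := Walk.dart_snd_mem_support_of_mem_darts _ hd
        have hadjH : H.Adj d.fst d.snd := d.adj
        have hGadj : G.Adj d.fst d.snd := hHadjG hadjH
        have hedge : d.edge ∈ C.edges := List.mem_map_of_mem (f := Dart.edge) hd
        have hxe : x s(d.fst, d.snd) ≤ mx := by
          rw [hmx]
          exact le_foldrmax _ _ (List.mem_map_of_mem (f := x) hedge)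
        have hQu : ∀ e ∈ (q d.fst hu).edges, e ∈ G.edgeSet :=
          fun e he => hG'sub ((q d.fst hu).edges_subset_edgeSet he)
        have hQv : ∀ e ∈ (q d.snd hv').edges, e ∈ G.edgeSet :=
          fun e he => hG'sub ((q d.snd hv').edges_subset_edgeSet he)
        have hB := lemB z (((q d.fst hu).transfer G hQu).append
          (Walk.cons hGadj ((q d.snd hv').transfer G hQv).reverse)) (by
            rw [walkWeight_append, walkWeight_cons, walkWeight_reverse,
              walkWeight_transfer, walkWeight_transfer]
            have h1 := hq d.fst hu
            have h2 := hq d.snd hv'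
            rw [hε] at h1 h2
            linarith)
        rw [walkSum_append, walkSum_cons, walkSum_reverse c hc,
          walkSum_transfer, walkSum_transfer] at hB
        have hval : c d.fst d.snd
            = walkSum c (q d.snd hv') - walkSum c (q d.fst hu) := by
          linear_combination hB
        rw [hφ]
        simp only [dif_pos hu, dif_pos hv']
        exact hval
      rw [walkSum_telescope c φ C hdart, sub_self]
    -- every closed walk in H is consistent
    have claim2 : ∀ (r : V) (W : H.Walk r r), walkSum c W = 0 := by
      intro r W
      by_contra hne
      obtain ⟨u, C, h1, h2, _⟩ := walk_decomp (Γ := H) c x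
        (fun e he => hx e (hHsubG he)) hcH W.length r W le_rfl hne
      exact h2 (claim1 u C h1)
    -- construct the assignment
    have hreach : ∀ v : V, H.Reachable (Quot.out (H.connectedComponentMk v)) v := by
      intro v
      apply ConnectedComponent.exact
      exact Quot.out_eq _
    refine ⟨fun v => walkSum c (Nonempty.some (hreach v)), ?_⟩
    intro u v huv
    have hr : H.connectedComponentMk u = H.connectedComponentMk v :=
      ConnectedComponent.sound huv.reachable
    have hrq : Quot.out (H.connectedComponentMk u) = Quot.out (H.connectedComponentMk v) := by
      rw [hr]
    have hcl := claim2 _ (((Nonempty.some (hreach u)).append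
      (Walk.cons huv (Nonempty.some (hreach v)).reverse)).copy rfl hrq.symm)
    rw [walkSum_copy, walkSum_append, walkSum_cons, walkSum_reverse c hcH] at hcl
    linear_combination -hcl
  · -- expected cost bound
    have key2 : ∀ e ∈ G.edgeFinset,
        ∑ ω, μ ω * Set.indicator (F1 ∪ F2 ω) cost e ≤ (2 + 4 * D) * (cost e * x e) := by
      intro e he
      have heG : e ∈ G.edgeSet := mem_edgeFinset.mp he
      have hce : 0 ≤ cost e := hcost e heG
      have hxe0 : 0 ≤ x e := hx e heG
      by_cases h1 : e ∈ F1
      · have hind : ∀ ω, Set.indicator (F1 ∪ F2 ω) cost e = cost e :=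
          fun ω => Set.indicator_of_mem (Set.mem_union_left _ h1) cost
        simp_rw [hind]
        rw [← Finset.sum_mul, hμ1, one_mul]
        have hxe : 1 / 2 ≤ x e := by
          rw [hF1] at h1
          exact h1.2
        nlinarith [mul_nonneg (mul_nonneg hD hce) hxe0]
      · have heG' : e ∈ G'.edgeSet := by
          rw [hG', edgeSet_deleteEdges]; exact ⟨heG, h1⟩
        revert heG hce hxe0 h1 heG'
        induction e using Sym2.ind with
        | _ u v =>
        intro heG hce hxe0 h1 heG'
        have hadj : G'.Adj u v := (G'.mem_edgeSet).mp heG'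
        have hmem : ∀ ω, (s(u, v) ∈ F2 ω) ↔ P ω u ≠ P ω v := by
          intro ω
          rw [hF2 ω]
          constructor
          · rintro ⟨-, a, b, hab, hP⟩
            rw [Sym2.eq_iff] at hab
            rcases hab with ⟨rfl, rfl⟩ | ⟨rfl, rfl⟩
            · exact hP
            · exact hP.symm
          · intro h
            exact ⟨heG', u, v, rfl, h⟩
        have hind : ∀ ω, Set.indicator (F1 ∪ F2 ω) cost s(u, v)
            = if P ω u ≠ P ω v then cost s(u, v) else 0 := by
          intro ω
          by_cases hP : P ω u ≠ P ω v
          · rw [if_pos hP]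
            exact Set.indicator_of_mem (Set.mem_union_right _ ((hmem ω).mpr hP)) cost
          · rw [if_neg hP]
            apply Set.indicator_of_notMem
            rintro (hA | hB)
            · exact h1 hA
            · exact hP ((hmem ω).mp hB)
        calc ∑ ω, μ ω * Set.indicator (F1 ∪ F2 ω) cost s(u, v)
            = ∑ ω, cost s(u, v) * (if P ω u ≠ P ω v then μ ω else 0) := by
              apply Finset.sum_congr rfl
              intro ω _
              rw [hind ω]
              by_cases hP : P ω u ≠ P ω v
              · rw [if_pos hP, if_pos hP]; ring
              · rw [if_neg hP, if_neg hP]; ring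
          _ = cost s(u, v) * ∑ ω, (if P ω u ≠ P ω v then μ ω else 0) := by
              rw [Finset.mul_sum]
          _ ≤ cost s(u, v) * (4 * D * x s(u, v)) :=
              mul_le_mul_of_nonneg_left (hcut u v hadj) hce
          _ ≤ (2 + 4 * D) * (cost s(u, v) * x s(u, v)) := by nlinarith
    calc ∑ ω, μ ω * ∑ e ∈ G.edgeFinset, Set.indicator (F1 ∪ F2 ω) cost e
        = ∑ ω, ∑ e ∈ G.edgeFinset, μ ω * Set.indicator (F1 ∪ F2 ω) cost e := by
          simp_rw [Finset.mul_sum]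
      _ = ∑ e ∈ G.edgeFinset, ∑ ω, μ ω * Set.indicator (F1 ∪ F2 ω) cost e :=
          Finset.sum_comm
      _ ≤ ∑ e ∈ G.edgeFinset, (2 + 4 * D) * (cost e * x e) :=
          Finset.sum_le_sum key2
      _ = (2 + 4 * D) * ∑ e ∈ G.edgeFinset, cost e * x e := by
          rw [Finset.mul_sum]
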